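/- (Middle game A) If b ≥ 2, then nim(TER(M)) = 1 for M = [[1,b,1],[0,1,0],[1,b,1]]. -/
import Mathlib


/-- The minimum excludant of a set of naturals. -/
noncomputable def mex (S : Set ℕ) : ℕ := sInf {n : ℕ | n ∉ S}

/-- A gamegraph: positions with an option function whose option relation is
well-founded (all plays are acyclic), together with a starting position. -/
structure GameGraph where
  Pos : Type
  opt : Pos → Set Pos
  wf : WellFounded fun q p => q ∈ opt p
  start : Pos

/-- The nim-value of a position: the mex of the nim-values of its options;
terminal positions get nim-value `0`. -/
noncomputable def GameGraph.nim (G : GameGraph) : G.Pos → ℕ :=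
  G.wf.fix fun p ih => mex {n : ℕ | ∃ q, ∃ h : q ∈ G.opt p, ih q h = n}

/-- The nim-value of a gamegraph is the nim-value of its starting position. -/
noncomputable def GameGraph.nimValue (G : GameGraph) : ℕ := G.nim G.start

/-- 3×3 matrices of nonnegative integers. -/
abbrev Mat3 := Fin 3 → Fin 3 → ℕ

/-- All four edge sums (top row, bottom row, left column, right column) are positive. -/
def edgeOK (M : Mat3) : Prop :=
  0 < M 0 0 + M 0 1 + M 0 2 ∧ 0 < M 2 0 + M 2 1 + M 2 2 ∧
  0 < M 0 0 + M 1 0 + M 2 0 ∧ 0 < M 0 2 + M 1 2 + M 2 2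

/-- Decrease entry `(i, j)` by one. -/
def decEntry (M : Mat3) (i j : Fin 3) : Mat3 :=
  fun a b => if a = i ∧ b = j then M a b - 1 else M a b

/-- Matrices obtained from `M` by decreasing one positive entry by `1`. -/
def matMoves (M : Mat3) : Set Mat3 :=
  {N | ∃ i j, 0 < M i j ∧ N = decEntry M i j}

/-- Options in the avoidance matrix game `DNT(M)`: decrease a positive entry by one
so that all four edge sums remain positive. -/
def DNTmatOpt (M : Mat3) : Set Mat3 := {N | N ∈ matMoves M ∧ edgeOK N}

/-- Options in the achievement matrix game `TER(M)`: a matrix with a zero edge sum is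
terminal; otherwise any positive entry may be decreased by one. -/
def TERmatOpt (M : Mat3) : Set Mat3 := {N | edgeOK M ∧ N ∈ matMoves M}

def mtot (M : Mat3) : ℕ := ∑ p : Fin 3 × Fin 3, M p.1 p.2

theorem mtot_lt {M N : Mat3} (h : N ∈ matMoves M) : mtot N < mtot M := by
  obtain ⟨i, j, hpos, rfl⟩ := h
  unfold mtot
  apply Finset.sum_lt_sum
  · intro p _
    simp only [decEntry]
    split <;> omega
  · refine ⟨(i, j), Finset.mem_univ _, ?_⟩
    have hlt : M i j - 1 < M i j := by omega
    simpa [decEntry] using hlt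

theorem matWF {opt : Mat3 → Set Mat3} (h : ∀ M N, N ∈ opt M → N ∈ matMoves M) :
    WellFounded fun N M => N ∈ opt M :=
  Subrelation.wf (fun {N M} hNM => mtot_lt (h M N hNM)) (InvImage.wf mtot Nat.lt_wfRel.wf)

/-- The gamegraph of the matrix game `DNT(M)` with starting position `M`. -/
def DNTmat (M : Mat3) : GameGraph :=
  ⟨Mat3, DNTmatOpt, matWF (fun _ _ h => h.1), M⟩

/-- The gamegraph of the matrix game `TER(M)` with starting position `M`. -/
def TERmat (M : Mat3) : GameGraph :=
  ⟨Mat3, TERmatOpt, matWF (fun _ _ h => h.2), M⟩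

/-- The nim-value of the matrix game `DNT(M)`. -/
noncomputable def nimDNTmat (M : Mat3) : ℕ := (DNTmat M).nimValue

/-- The nim-value of the matrix game `TER(M)`. -/
noncomputable def nimTERmat (M : Mat3) : ℕ := (TERmat M).nimValue

/-! ### Auxiliary development for the proof -/

section MiddleGameA

/-- Edge condition in terms of the seven relevant entries
`a t c / 0 e 0 / g u i` (the class of positions reachable from the start). -/
def eOKp (a t c e g u i : ℕ) : Prop :=
  0 < a + t + c ∧ 0 < g + u + i ∧ 0 < a + g ∧ 0 < c + i

/-- Claimed nim-value-0 positions (terminal, or all corners `1` with even `t+u+e`). -/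
def Sp (a t c e g u i : ℕ) : Prop :=
  ¬ eOKp a t c e g u i ∨
    (a = 1 ∧ c = 1 ∧ g = 1 ∧ i = 1 ∧ (t + u + e) % 2 = 0)

/-- Claimed nim-value-1 positions. -/
def Tp (a t c e g u i : ℕ) : Prop :=
  eOKp a t c e g u i ∧ (
    (a = 0 ∧ c = 0 ∧ (t + u + e) % 2 = 1) ∨
    (g = 0 ∧ i = 0 ∧ (t + u + e) % 2 = 1) ∨
    (a = 0 ∧ c = 1 ∧ g = 1 ∧ i = 0 ∧ (t + u + e) % 2 = 0) ∨
    (a = 1 ∧ c = 0 ∧ g = 0 ∧ i = 1 ∧ (t + u + e) % 2 = 0) ∨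
    (a = 1 ∧ c = 1 ∧ g = 1 ∧ i = 1 ∧ (t + u + e) % 2 = 1 ∧ 1 ≤ t ∧ 1 ≤ u) ∨
    (a = 0 ∧ c = 1 ∧ g = 1 ∧ i = 1 ∧ t = 0 ∧ (u + e) % 2 = 1) ∨
    (a = 1 ∧ c = 0 ∧ g = 1 ∧ i = 1 ∧ t = 0 ∧ (u + e) % 2 = 1) ∨
    (a = 1 ∧ c = 1 ∧ g = 0 ∧ i = 1 ∧ u = 0 ∧ (t + e) % 2 = 1) ∨
    (a = 1 ∧ c = 1 ∧ g = 1 ∧ i = 0 ∧ u = 0 ∧ (t + e) % 2 = 1))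

/-- `S` applied to a matrix. -/
def Scl (M : Mat3) : Prop :=
  Sp (M 0 0) (M 0 1) (M 0 2) (M 1 1) (M 2 0) (M 2 1) (M 2 2)

/-- `T` applied to a matrix. -/
def Tcl (M : Mat3) : Prop :=
  Tp (M 0 0) (M 0 1) (M 0 2) (M 1 1) (M 2 0) (M 2 1) (M 2 2)

/-- The class of positions reachable from the starting position. -/
def classP (M : Mat3) : Prop :=
  M 1 0 = 0 ∧ M 1 2 = 0 ∧ M 0 0 ≤ 1 ∧ M 0 2 ≤ 1 ∧ M 1 1 ≤ 1 ∧ M 2 0 ≤ 1 ∧ M 2 2 ≤ 1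

theorem edgeOK_iff_eOKp (M : Mat3) (h : classP M) :
    edgeOK M ↔ eOKp (M 0 0) (M 0 1) (M 0 2) (M 1 1) (M 2 0) (M 2 1) (M 2 2) := by
  unfold edgeOK eOKp classP at *; omega

theorem decEntry_le (M : Mat3) (i j r s : Fin 3) : decEntry M i j r s ≤ M r s := by
  unfold decEntry; split <;> omega

theorem classP_dec (M : Mat3) (i j : Fin 3) (h : classP M) : classP (decEntry M i j) := by
  unfold classP at *
  have h1 := decEntry_le M i j 1 0
  have h2 := decEntry_le M i j 1 2
  have h3 := decEntry_le M i j 0 0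
  have h4 := decEntry_le M i j 0 2
  have h5 := decEntry_le M i j 1 1
  have h6 := decEntry_le M i j 2 0
  have h7 := decEntry_le M i j 2 2
  omega

set_option maxHeartbeats 1000000 in
/-- From a position with nim-value 0, no move stays in the nim-value-0 class. -/
theorem Sp_closed (a t c e g u i : ℕ)
    (ha : a ≤ 1) (hc : c ≤ 1) (he : e ≤ 1) (hg : g ≤ 1) (hi : i ≤ 1)
    (hS : Sp a t c e g u i) (hE : eOKp a t c e g u i) :
    (0 < a → ¬ Sp (a-1) t c e g u i) ∧ (0 < t → ¬ Sp a (t-1) c e g u i) ∧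
    (0 < c → ¬ Sp a t (c-1) e g u i) ∧ (0 < e → ¬ Sp a t c (e-1) g u i) ∧
    (0 < g → ¬ Sp a t c e (g-1) u i) ∧ (0 < u → ¬ Sp a t c e g (u-1) i) ∧
    (0 < i → ¬ Sp a t c e g u (i-1)) := by
  unfold Sp eOKp at *
  interval_cases a <;> interval_cases c <;> interval_cases e <;>
    interval_cases g <;> interval_cases i <;> omega

/-- From a position not of nim-value 0, some move reaches the nim-value-0 class. -/
theorem Sp_reach (a t c e g u i : ℕ)
    (ha : a ≤ 1) (hc : c ≤ 1) (he : e ≤ 1) (hg : g ≤ 1) (hi : i ≤ 1)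
    (hS : ¬ Sp a t c e g u i) (hE : eOKp a t c e g u i) :
    (0 < a ∧ Sp (a-1) t c e g u i) ∨ (0 < t ∧ Sp a (t-1) c e g u i) ∨
    (0 < c ∧ Sp a t (c-1) e g u i) ∨ (0 < e ∧ Sp a t c (e-1) g u i) ∨
    (0 < g ∧ Sp a t c e (g-1) u i) ∨ (0 < u ∧ Sp a t c e g (u-1) i) ∨
    (0 < i ∧ Sp a t c e g u (i-1)) := by
  unfold Sp eOKp at *
  by_cases h1 : a = 0
  · exact Or.inr (Or.inr (Or.inr (Or.inr (Or.inl ⟨by omega, Or.inl (by omega)⟩))))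
  by_cases h2 : c = 0
  · exact Or.inr (Or.inr (Or.inr (Or.inr (Or.inr (Or.inr ⟨by omega, Or.inl (by omega)⟩)))))
  by_cases h3 : g = 0
  · exact Or.inl ⟨by omega, Or.inl (by omega)⟩
  by_cases h4 : i = 0
  · exact Or.inr (Or.inr (Or.inl ⟨by omega, Or.inl (by omega)⟩))
  by_cases h5 : e = 1
  · exact Or.inr (Or.inr (Or.inr (Or.inl ⟨by omega, Or.inr (by omega)⟩)))
  by_cases h6 : t % 2 = 1
  · exact Or.inr (Or.inl ⟨by omega, Or.inr (by omega)⟩)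
  · exact Or.inr (Or.inr (Or.inr (Or.inr (Or.inr (Or.inl ⟨by omega, Or.inr (by omega)⟩)))))

set_option maxHeartbeats 1000000 in
/-- From a nim-value-1 position, no move stays in the nim-value-1 class. -/
theorem Tp_closed (a t c e g u i : ℕ)
    (ha : a ≤ 1) (hc : c ≤ 1) (he : e ≤ 1) (hg : g ≤ 1) (hi : i ≤ 1)
    (hT : Tp a t c e g u i) :
    (0 < a → ¬ Tp (a-1) t c e g u i) ∧ (0 < t → ¬ Tp a (t-1) c e g u i) ∧
    (0 < c → ¬ Tp a t (c-1) e g u i) ∧ (0 < e → ¬ Tp a t c (e-1) g u i) ∧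
    (0 < g → ¬ Tp a t c e (g-1) u i) ∧ (0 < u → ¬ Tp a t c e g (u-1) i) ∧
    (0 < i → ¬ Tp a t c e g u (i-1)) := by
  unfold Tp eOKp at *
  interval_cases a <;> interval_cases c <;> interval_cases e <;>
    interval_cases g <;> interval_cases i <;> omega

set_option maxHeartbeats 1000000 in
/-- From a position of nim-value ≥ 2, some move reaches the nim-value-1 class. -/
theorem Tp_reach (a t c e g u i : ℕ)
    (ha : a ≤ 1) (hc : c ≤ 1) (he : e ≤ 1) (hg : g ≤ 1) (hi : i ≤ 1)
    (hS : ¬ Sp a t c e g u i) (hT : ¬ Tp a t c e g u i) (hE : eOKp a t c e g u i) :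
    (0 < a ∧ Tp (a-1) t c e g u i) ∨ (0 < t ∧ Tp a (t-1) c e g u i) ∨
    (0 < c ∧ Tp a t (c-1) e g u i) ∨ (0 < e ∧ Tp a t c (e-1) g u i) ∨
    (0 < g ∧ Tp a t c e (g-1) u i) ∨ (0 < u ∧ Tp a t c e g (u-1) i) ∨
    (0 < i ∧ Tp a t c e g u (i-1)) := by
  unfold Sp at hS
  unfold Tp at hT ⊢
  unfold eOKp at hS hT hE ⊢
  obtain ⟨hE1, hE2, hE3, hE4⟩ := hE
  have hnS2 : ¬(a = 1 ∧ c = 1 ∧ g = 1 ∧ i = 1 ∧ (t + u + e) % 2 = 0) :=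
    fun h => hS (Or.inr h)
  have hnD := fun h => hT ⟨⟨hE1, hE2, hE3, hE4⟩, h⟩
  have hnD1 : ¬(a = 0 ∧ c = 0 ∧ (t + u + e) % 2 = 1) := fun h => hnD (Or.inl h)
  have hnD2 : ¬(g = 0 ∧ i = 0 ∧ (t + u + e) % 2 = 1) := fun h => hnD (Or.inr (Or.inl h))
  have hnD3 : ¬(a = 0 ∧ c = 1 ∧ g = 1 ∧ i = 0 ∧ (t + u + e) % 2 = 0) :=
    fun h => hnD (Or.inr (Or.inr (Or.inl h)))
  have hnD4 : ¬(a = 1 ∧ c = 0 ∧ g = 0 ∧ i = 1 ∧ (t + u + e) % 2 = 0) :=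
    fun h => hnD (Or.inr (Or.inr (Or.inr (Or.inl h))))
  have hnD5 : ¬(a = 1 ∧ c = 1 ∧ g = 1 ∧ i = 1 ∧ (t + u + e) % 2 = 1 ∧ 1 ≤ t ∧ 1 ≤ u) :=
    fun h => hnD (Or.inr (Or.inr (Or.inr (Or.inr (Or.inl h)))))
  have hnD6 : ¬(a = 0 ∧ c = 1 ∧ g = 1 ∧ i = 1 ∧ t = 0 ∧ (u + e) % 2 = 1) :=
    fun h => hnD (Or.inr (Or.inr (Or.inr (Or.inr (Or.inr (Or.inl h))))))
  have hnD7 : ¬(a = 1 ∧ c = 0 ∧ g = 1 ∧ i = 1 ∧ t = 0 ∧ (u + e) % 2 = 1) :=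
    fun h => hnD (Or.inr (Or.inr (Or.inr (Or.inr (Or.inr (Or.inr (Or.inl h)))))))
  have hnD8 : ¬(a = 1 ∧ c = 1 ∧ g = 0 ∧ i = 1 ∧ u = 0 ∧ (t + e) % 2 = 1) :=
    fun h => hnD (Or.inr (Or.inr (Or.inr (Or.inr (Or.inr (Or.inr (Or.inr (Or.inl h))))))))
  have hnD9 : ¬(a = 1 ∧ c = 1 ∧ g = 1 ∧ i = 0 ∧ u = 0 ∧ (t + e) % 2 = 1) :=
    fun h => hnD (Or.inr (Or.inr (Or.inr (Or.inr (Or.inr (Or.inr (Or.inr (Or.inr h))))))))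
  clear hS hT hnD
  by_cases hac : a = 0 ∧ c = 0
  · -- both top corners 0: move to D1
    clear hnS2 hnD2 hnD3 hnD4 hnD5 hnD6 hnD7 hnD8 hnD9
    by_cases he1 : e = 1
    · exact Or.inr (Or.inr (Or.inr (Or.inl ⟨by omega,
        ⟨by omega, by omega, by omega, by omega⟩, Or.inl (by omega)⟩)))
    by_cases hu : u % 2 = 1
    · exact Or.inr (Or.inr (Or.inr (Or.inr (Or.inr (Or.inl ⟨by omega,
        ⟨by omega, by omega, by omega, by omega⟩, Or.inl (by omega)⟩)))))
    · exact Or.inr (Or.inl ⟨by omega,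
        ⟨by omega, by omega, by omega, by omega⟩, Or.inl (by omega)⟩)
  by_cases hgi : g = 0 ∧ i = 0
  · -- both bottom corners 0: move to D2
    clear hnS2 hnD1 hnD3 hnD4 hnD5 hnD6 hnD7 hnD8 hnD9
    by_cases he1 : e = 1
    · exact Or.inr (Or.inr (Or.inr (Or.inl ⟨by omega,
        ⟨by omega, by omega, by omega, by omega⟩, Or.inr (Or.inl (by omega))⟩)))
    by_cases ht : t % 2 = 1
    · exact Or.inr (Or.inl ⟨by omega,
        ⟨by omega, by omega, by omega, by omega⟩, Or.inr (Or.inl (by omega))⟩)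
    · exact Or.inr (Or.inr (Or.inr (Or.inr (Or.inr (Or.inl ⟨by omega,
        ⟨by omega, by omega, by omega, by omega⟩, Or.inr (Or.inl (by omega))⟩)))))
  by_cases hd3 : a = 0 ∧ c = 1 ∧ g = 1 ∧ i = 0
  · -- anti-diagonal: stay in D3
    clear hnS2 hnD1 hnD2 hnD4 hnD5 hnD6 hnD7 hnD8 hnD9
    by_cases he1 : e = 1
    · exact Or.inr (Or.inr (Or.inr (Or.inl ⟨by omega,
        ⟨by omega, by omega, by omega, by omega⟩, Or.inr (Or.inr (Or.inl (by omega)))⟩)))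
    by_cases ht : t % 2 = 1
    · exact Or.inr (Or.inl ⟨by omega,
        ⟨by omega, by omega, by omega, by omega⟩, Or.inr (Or.inr (Or.inl (by omega)))⟩)
    · exact Or.inr (Or.inr (Or.inr (Or.inr (Or.inr (Or.inl ⟨by omega,
        ⟨by omega, by omega, by omega, by omega⟩, Or.inr (Or.inr (Or.inl (by omega)))⟩)))))
  by_cases hd4 : a = 1 ∧ c = 0 ∧ g = 0 ∧ i = 1
  · -- anti-diagonal: stay in D4
    clear hnS2 hnD1 hnD2 hnD3 hnD5 hnD6 hnD7 hnD8 hnD9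
    by_cases he1 : e = 1
    · exact Or.inr (Or.inr (Or.inr (Or.inl ⟨by omega,
        ⟨by omega, by omega, by omega, by omega⟩,
        Or.inr (Or.inr (Or.inr (Or.inl (by omega))))⟩)))
    by_cases ht : t % 2 = 1
    · exact Or.inr (Or.inl ⟨by omega,
        ⟨by omega, by omega, by omega, by omega⟩,
        Or.inr (Or.inr (Or.inr (Or.inl (by omega))))⟩)
    · exact Or.inr (Or.inr (Or.inr (Or.inr (Or.inr (Or.inl ⟨by omega,
        ⟨by omega, by omega, by omega, by omega⟩,
        Or.inr (Or.inr (Or.inr (Or.inl (by omega))))⟩)))))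
  by_cases ha0 : a = 0
  · -- only corner a is 0
    clear hnS2 hnD1 hnD2 hnD3 hnD4 hnD5 hnD7 hnD8 hnD9
    by_cases hcase : 1 ≤ t ∧ (t + u + e) % 2 = 1
    · -- remove c, reach D1
      exact Or.inr (Or.inr (Or.inl ⟨by omega,
        ⟨by omega, by omega, by omega, by omega⟩, Or.inl (by omega)⟩))
    · -- remove i, reach D3
      exact Or.inr (Or.inr (Or.inr (Or.inr (Or.inr (Or.inr ⟨by omega,
        ⟨by omega, by omega, by omega, by omega⟩,
        Or.inr (Or.inr (Or.inl (by omega)))⟩)))))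
  by_cases hc0 : c = 0
  · clear hnS2 hnD1 hnD2 hnD3 hnD4 hnD5 hnD6 hnD8 hnD9
    by_cases hcase : 1 ≤ t ∧ (t + u + e) % 2 = 1
    · -- remove a, reach D1
      exact Or.inl ⟨by omega,
        ⟨by omega, by omega, by omega, by omega⟩, Or.inl (by omega)⟩
    · -- remove g, reach D4
      exact Or.inr (Or.inr (Or.inr (Or.inr (Or.inl ⟨by omega,
        ⟨by omega, by omega, by omega, by omega⟩,
        Or.inr (Or.inr (Or.inr (Or.inl (by omega))))⟩))))
  by_cases hg0 : g = 0
  · clear hnS2 hnD1 hnD2 hnD3 hnD4 hnD5 hnD6 hnD7 hnD9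
    by_cases hcase : 1 ≤ u ∧ (t + u + e) % 2 = 1
    · -- remove i, reach D2
      exact Or.inr (Or.inr (Or.inr (Or.inr (Or.inr (Or.inr ⟨by omega,
        ⟨by omega, by omega, by omega, by omega⟩, Or.inr (Or.inl (by omega))⟩)))))
    · -- remove c, reach D4
      exact Or.inr (Or.inr (Or.inl ⟨by omega,
        ⟨by omega, by omega, by omega, by omega⟩,
        Or.inr (Or.inr (Or.inr (Or.inl (by omega))))⟩))
  by_cases hi0 : i = 0
  · clear hnS2 hnD1 hnD2 hnD3 hnD4 hnD5 hnD6 hnD7 hnD8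
    by_cases hcase : 1 ≤ u ∧ (t + u + e) % 2 = 1
    · -- remove g, reach D2
      exact Or.inr (Or.inr (Or.inr (Or.inr (Or.inl ⟨by omega,
        ⟨by omega, by omega, by omega, by omega⟩, Or.inr (Or.inl (by omega))⟩))))
    · -- remove a, reach D3
      exact Or.inl ⟨by omega,
        ⟨by omega, by omega, by omega, by omega⟩, Or.inr (Or.inr (Or.inl (by omega)))⟩
  -- all four corners are 1, parity odd, and t = 0 or u = 0
  clear hnD1 hnD2 hnD3 hnD4 hnD6 hnD7 hnD8 hnD9
  by_cases ht0 : t = 0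
  · -- remove a, reach D6
    exact Or.inl ⟨by omega, ⟨by omega, by omega, by omega, by omega⟩,
      Or.inr (Or.inr (Or.inr (Or.inr (Or.inr (Or.inl (by omega))))))⟩
  · -- u = 0; remove g, reach D8
    exact Or.inr (Or.inr (Or.inr (Or.inr (Or.inl ⟨by omega,
      ⟨by omega, by omega, by omega, by omega⟩,
      Or.inr (Or.inr (Or.inr (Or.inr (Or.inr (Or.inr (Or.inr (Or.inl (by omega))))))))⟩))))

theorem Tp_not_Sp (a t c e g u i : ℕ) (hT : Tp a t c e g u i) : ¬ Sp a t c e g u i := by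
  unfold Tp Sp eOKp at *; omega

/-! ### mex lemmas -/

theorem mex_empty : mex (∅ : Set ℕ) = 0 :=
  Nat.sInf_eq_zero.mpr (Or.inl (by simp))

theorem mex_eq_zero_iff {A : Set ℕ} (hA : A.Finite) : mex A = 0 ↔ 0 ∉ A := by
  constructor
  · intro h h0
    have hne : {n : ℕ | n ∉ A}.Nonempty := hA.infinite_compl.nonempty
    have hmem := Nat.sInf_mem hne
    rw [show sInf {n : ℕ | n ∉ A} = mex A from rfl, h] at hmem
    exact hmem h0
  · intro h
    exact Nat.sInf_eq_zero.mpr (Or.inl h)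

theorem mex_eq_one_iff {A : Set ℕ} : mex A = 1 ↔ 0 ∈ A ∧ 1 ∉ A := by
  constructor
  · intro h
    have hne : {n : ℕ | n ∉ A}.Nonempty := by
      by_contra hcon
      rw [Set.not_nonempty_iff_eq_empty] at hcon
      rw [mex, hcon, Nat.sInf_empty] at h
      exact absurd h one_ne_zero.symm
    have h1 : (1 : ℕ) ∉ A := by
      have hmem := Nat.sInf_mem hne
      rwa [show sInf {n : ℕ | n ∉ A} = mex A from rfl, h] at hmem
    refine ⟨?_, h1⟩
    by_contra h0
    have : mex A = 0 := Nat.sInf_eq_zero.mpr (Or.inl h0)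
    omega
  · rintro ⟨h0, h1⟩
    have hle : sInf {n : ℕ | n ∉ A} ≤ 1 := Nat.sInf_le h1
    have hne0 : sInf {n : ℕ | n ∉ A} ≠ 0 := by
      intro hc
      rcases Nat.sInf_eq_zero.mp hc with hz | hz
      · exact hz h0
      · rw [Set.eq_empty_iff_forall_notMem] at hz
        exact hz 1 h1
    rw [mex]; omega

/-! ### the nim function on matrices -/

noncomputable def nimT : Mat3 → ℕ := (TERmat (fun _ _ => 0)).nim

theorem nimTERmat_eq_nimT (M : Mat3) : nimTERmat M = nimT M := rfl

theorem nimT_eq (P : Mat3) :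
    nimT P = mex {n | ∃ Q, ∃ _ : Q ∈ TERmatOpt P, nimT Q = n} := by
  unfold nimT GameGraph.nim
  exact WellFounded.fix_eq _ _ _

theorem exists_opt_iff (M : Mat3) (hcl : classP M) (hE : edgeOK M) (P : Mat3 → Prop) :
    (∃ Q, ∃ _ : Q ∈ TERmatOpt M, P Q) ↔
      (0 < M 0 0 ∧ P (decEntry M 0 0)) ∨ (0 < M 0 1 ∧ P (decEntry M 0 1)) ∨
      (0 < M 0 2 ∧ P (decEntry M 0 2)) ∨ (0 < M 1 1 ∧ P (decEntry M 1 1)) ∨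
      (0 < M 2 0 ∧ P (decEntry M 2 0)) ∨ (0 < M 2 1 ∧ P (decEntry M 2 1)) ∨
      (0 < M 2 2 ∧ P (decEntry M 2 2)) := by
  have h9 : ∀ (i j : Fin 3),
      (i=0∧j=0)∨(i=0∧j=1)∨(i=0∧j=2)∨(i=1∧j=0)∨(i=1∧j=1)∨(i=1∧j=2)∨
      (i=2∧j=0)∨(i=2∧j=1)∨(i=2∧j=2) := by decide
  constructor
  · rintro ⟨Q, ⟨-, i, j, hpos, rfl⟩, hP⟩
    rcases h9 i j with ⟨rfl,rfl⟩|⟨rfl,rfl⟩|⟨rfl,rfl⟩|⟨rfl,rfl⟩|⟨rfl,rfl⟩|⟨rfl,rfl⟩|⟨rfl,rfl⟩|⟨rfl,rfl⟩|⟨rfl,rfl⟩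
    · exact Or.inl ⟨hpos, hP⟩
    · exact Or.inr (Or.inl ⟨hpos, hP⟩)
    · exact Or.inr (Or.inr (Or.inl ⟨hpos, hP⟩))
    · exact absurd hpos (by rw [hcl.1]; omega)
    · exact Or.inr (Or.inr (Or.inr (Or.inl ⟨hpos, hP⟩)))
    · exact absurd hpos (by rw [hcl.2.1]; omega)
    · exact Or.inr (Or.inr (Or.inr (Or.inr (Or.inl ⟨hpos, hP⟩))))
    · exact Or.inr (Or.inr (Or.inr (Or.inr (Or.inr (Or.inl ⟨hpos, hP⟩)))))
    · exact Or.inr (Or.inr (Or.inr (Or.inr (Or.inr (Or.inr ⟨hpos, hP⟩)))))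
  · rintro (⟨h,hP⟩|⟨h,hP⟩|⟨h,hP⟩|⟨h,hP⟩|⟨h,hP⟩|⟨h,hP⟩|⟨h,hP⟩)
    · exact ⟨_, ⟨hE, 0, 0, h, rfl⟩, hP⟩
    · exact ⟨_, ⟨hE, 0, 1, h, rfl⟩, hP⟩
    · exact ⟨_, ⟨hE, 0, 2, h, rfl⟩, hP⟩
    · exact ⟨_, ⟨hE, 1, 1, h, rfl⟩, hP⟩
    · exact ⟨_, ⟨hE, 2, 0, h, rfl⟩, hP⟩
    · exact ⟨_, ⟨hE, 2, 1, h, rfl⟩, hP⟩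
    · exact ⟨_, ⟨hE, 2, 2, h, rfl⟩, hP⟩

set_option maxHeartbeats 1000000 in
/-- The classification of nim-values 0 and 1 on the class of reachable positions. -/
theorem mainAux : ∀ N : ℕ, ∀ M : Mat3, mtot M < N → classP M →
    ((nimT M = 0 ↔ Scl M) ∧ (nimT M = 1 ↔ Tcl M)) := by
  intro N
  induction N with
  | zero => intro M h; omega
  | succ N ih =>
    intro M hMN hcl
    have hrw := nimT_eq M
    by_cases hE : edgeOK M
    · -- non-terminal position
      have ha := hcl.2.2.1
      have hc := hcl.2.2.2.1
      have he := hcl.2.2.2.2.1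
      have hg := hcl.2.2.2.2.2.1
      have hi := hcl.2.2.2.2.2.2
      have hEe : eOKp (M 0 0) (M 0 1) (M 0 2) (M 1 1) (M 2 0) (M 2 1) (M 2 2) :=
        (edgeOK_iff_eOKp M hcl).mp hE
      have hfin : {n | ∃ Q, ∃ _ : Q ∈ TERmatOpt M, nimT Q = n}.Finite := by
        apply Set.Finite.subset
          ((Set.finite_range (fun p : Fin 3 × Fin 3 => decEntry M p.1 p.2)).image nimT)
        rintro n ⟨Q, ⟨-, i, j, -, rfl⟩, rfl⟩
        exact ⟨decEntry M i j, ⟨(i, j), rfl⟩, rfl⟩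
      have IH : ∀ Q, Q ∈ TERmatOpt M → ((nimT Q = 0 ↔ Scl Q) ∧ (nimT Q = 1 ↔ Tcl Q)) := by
        intro Q hQ
        have hlt : mtot Q < N := lt_of_lt_of_le (mtot_lt hQ.2) (Nat.lt_succ_iff.mp hMN)
        have hclQ : classP Q := by
          obtain ⟨-, i, j, -, rfl⟩ := hQ
          exact classP_dec M i j hcl
        exact ih Q hlt hclQ
      have h0A : (0 ∈ {n | ∃ Q, ∃ _ : Q ∈ TERmatOpt M, nimT Q = n}) ↔
          (∃ Q, ∃ _ : Q ∈ TERmatOpt M, Scl Q) := by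
        constructor
        · rintro ⟨Q, hQ, hn⟩; exact ⟨Q, hQ, ((IH Q hQ).1).mp hn⟩
        · rintro ⟨Q, hQ, hS⟩; exact ⟨Q, hQ, ((IH Q hQ).1).mpr hS⟩
      have h1A : (1 ∈ {n | ∃ Q, ∃ _ : Q ∈ TERmatOpt M, nimT Q = n}) ↔
          (∃ Q, ∃ _ : Q ∈ TERmatOpt M, Tcl Q) := by
        constructor
        · rintro ⟨Q, hQ, hn⟩; exact ⟨Q, hQ, ((IH Q hQ).2).mp hn⟩
        · rintro ⟨Q, hQ, hT⟩; exact ⟨Q, hQ, ((IH Q hQ).2).mpr hT⟩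
      have hexS := exists_opt_iff M hcl hE Scl
      have hexT := exists_opt_iff M hcl hE Tcl
      have hSop : (∃ Q, ∃ _ : Q ∈ TERmatOpt M, Scl Q) ↔ ¬ Scl M := by
        constructor
        · intro h hSM
          have hcls := Sp_closed (M 0 0) (M 0 1) (M 0 2) (M 1 1) (M 2 0) (M 2 1) (M 2 2)
            ha hc he hg hi hSM hEe
          rcases hexS.mp h with ⟨hp,hq⟩|⟨hp,hq⟩|⟨hp,hq⟩|⟨hp,hq⟩|⟨hp,hq⟩|⟨hp,hq⟩|⟨hp,hq⟩
          · exact hcls.1 hp hq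
          · exact hcls.2.1 hp hq
          · exact hcls.2.2.1 hp hq
          · exact hcls.2.2.2.1 hp hq
          · exact hcls.2.2.2.2.1 hp hq
          · exact hcls.2.2.2.2.2.1 hp hq
          · exact hcls.2.2.2.2.2.2 hp hq
        · intro hSM
          exact hexS.mpr (Sp_reach (M 0 0) (M 0 1) (M 0 2) (M 1 1) (M 2 0) (M 2 1) (M 2 2)
            ha hc he hg hi hSM hEe)
      constructor
      · rw [hrw, mex_eq_zero_iff hfin]
        constructor
        · intro h
          by_contra hS
          exact h (h0A.mpr (hSop.mpr hS))
        · intro hS h0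
          exact (hSop.mp (h0A.mp h0)) hS
      · rw [hrw, mex_eq_one_iff]
        constructor
        · rintro ⟨hin0, hout1⟩
          by_contra hT
          have hnS : ¬ Scl M := hSop.mp (h0A.mp hin0)
          have hre := Tp_reach (M 0 0) (M 0 1) (M 0 2) (M 1 1) (M 2 0) (M 2 1) (M 2 2)
            ha hc he hg hi hnS hT hEe
          exact hout1 (h1A.mpr (hexT.mpr hre))
        · intro hT
          refine ⟨h0A.mpr (hSop.mpr (Tp_not_Sp _ _ _ _ _ _ _ hT)), ?_⟩
          intro h1
          have hcls := Tp_closed (M 0 0) (M 0 1) (M 0 2) (M 1 1) (M 2 0) (M 2 1) (M 2 2)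
            ha hc he hg hi hT
          rcases hexT.mp (h1A.mp h1) with ⟨hp,hq⟩|⟨hp,hq⟩|⟨hp,hq⟩|⟨hp,hq⟩|⟨hp,hq⟩|⟨hp,hq⟩|⟨hp,hq⟩
          · exact hcls.1 hp hq
          · exact hcls.2.1 hp hq
          · exact hcls.2.2.1 hp hq
          · exact hcls.2.2.2.1 hp hq
          · exact hcls.2.2.2.2.1 hp hq
          · exact hcls.2.2.2.2.2.1 hp hq
          · exact hcls.2.2.2.2.2.2 hp hq
    · -- terminal position
      have hAe : {n | ∃ Q, ∃ _ : Q ∈ TERmatOpt M, nimT Q = n} = ∅ := by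
        rw [Set.eq_empty_iff_forall_notMem]
        rintro n ⟨Q, hQ, -⟩
        exact hE hQ.1
      rw [hAe, mex_empty] at hrw
      have hnE : ¬ eOKp (M 0 0) (M 0 1) (M 0 2) (M 1 1) (M 2 0) (M 2 1) (M 2 2) :=
        fun h => hE ((edgeOK_iff_eOKp M hcl).mpr h)
      constructor
      · rw [hrw]
        exact ⟨fun _ => Or.inl hnE, fun _ => rfl⟩
      · rw [hrw]
        constructor
        · intro h; omega
        · intro hT
          exact absurd ((edgeOK_iff_eOKp M hcl).mpr hT.1) hE

end MiddleGameA

/-- (Middle game A)If `b ≥ 2`, then `nim(TER([[1,b,1],[0,1,0],[1,b,1]])) = 1`. -/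
theorem TER_middle_game_A (b : ℕ) (hb : 2 ≤ b) :
    nimTERmat ![![1, b, 1], ![0, 1, 0], ![1, b, 1]] = 1 := by
  set M : Mat3 := ![![1, b, 1], ![0, 1, 0], ![1, b, 1]] with hM
  have hcl : classP M := ⟨rfl, rfl, Nat.le.refl, Nat.le.refl, Nat.le.refl, Nat.le.refl, Nat.le.refl⟩
  have hT : Tcl M := by
    show Tp 1 b 1 1 1 b 1
    unfold Tp eOKp
    omega
  have h := (mainAux (mtot M + 1) M (Nat.lt_succ_self _) hcl).2
  rw [nimTERmat_eq_nimT]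
  exact h.mpr hT
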